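/- Let X be a proper geodesic metric space and c a cocycle in the horoboundary ∂X. For every x ∈ X there exists a gradient ray γ : ℝ₊ → X for c with γ(0) = x, i.e. a path parametrized by arc length satisfying c(γ(s), γ(t)) = t − s for all s ≤ t. -/

import Mathlib

open Metric Set MeasureTheory

variable {X : Type*} [MetricSpace X]

/-- A map `γ` is a geodesic on the parameter set `s`. -/
def IsGeodesicOn (γ : ℝ → X) (s : Set ℝ) : Prop :=
  ∀ t ∈ s, ∀ t' ∈ s, dist (γ t) (γ t') = |t - t'|

/-- The set of nearest-point projections of points of `Z` onto `Y`. -/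
def projSet (Y Z : Set X) : Set X :=
  {y | y ∈ Y ∧ ∃ z ∈ Z, dist z y = Metric.infDist z Y}

/-- `Y` is an `α`-contracting closed subset: any geodesic at distance `≥ α` from `Y`
has projection onto `Y` of diameter `≤ α`. -/
def IsContractingSet (α : ℝ) (Y : Set X) : Prop :=
  IsClosed Y ∧ ∀ (γ : ℝ → X) (s : Set ℝ), IsGeodesicOn γ s →
    (∀ t ∈ s, α ≤ Metric.infDist (γ t) Y) →
    Metric.diam (projSet Y (γ '' s)) ≤ α

/-- `X` is a geodesic space: any two points are joined by a geodesic. -/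
def GeodesicSpace (X : Type*) [MetricSpace X] : Prop :=
  ∀ x y : X, ∃ γ : ℝ → X, γ 0 = x ∧ γ (dist x y) = y ∧
    IsGeodesicOn γ (Set.Icc 0 (dist x y))

/-- The Busemann cocycle associated to the point `z`. -/
def busemann (z : X) : X → X → ℝ := fun x y => dist x z - dist y z

/-- The horocompactification of `X`: the closure of the set of Busemann cocycles. -/
def horocompactification (X : Type*) [MetricSpace X] : Set (X → X → ℝ) :=
  closure (Set.range (busemann (X := X)))

/-- The horoboundary of `X`. -/
def horoboundary (X : Type*) [MetricSpace X] : Set (X → X → ℝ) :=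
  horocompactification X \ Set.range (busemann (X := X))

open Filter Topology

/-- Busemann cocycles are 1-Lipschitz in each variable. -/
lemma busemann_lip (w a a' b b' : X) :
    |busemann w a b - busemann w a' b'| ≤ dist a a' + dist b b' := by
  have h1 := abs_dist_sub_le a a' w
  have h2 := abs_dist_sub_le b b' w
  rw [abs_le] at h1 h2 ⊢
  simp only [busemann]
  constructor <;> nlinarith [h1.1, h1.2, h2.1, h2.2]

lemma mem_of_closure_horo {c : X → X → ℝ} (hc : c ∈ horocompactification X)
    {S : Set (X → X → ℝ)} (hS : IsClosed S) (h : ∀ w : X, busemann w ∈ S) : c ∈ S :=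
  closure_minimal (range_subset_iff.2 h) hS hc

lemma eval_continuous (a b : X) : Continuous fun f : X → X → ℝ => f a b :=
  (continuous_apply b).comp (continuous_apply a)

/-- Elements of the horocompactification are 1-Lipschitz in each variable. -/
lemma horo_lip {c : X → X → ℝ} (hc : c ∈ horocompactification X) (a a' b b' : X) :
    |c a b - c a' b'| ≤ dist a a' + dist b b' := by
  have : c ∈ {f : X → X → ℝ | |f a b - f a' b'| ≤ dist a a' + dist b b'} := by
    refine mem_of_closure_horo hc ?_ fun w => busemann_lip w a a' b b'
    exact isClosed_le (((eval_continuous a b).sub (eval_continuous a' b')).abs) continuous_const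
  exact this

set_option maxHeartbeats 1000000 in
theorem gradient_ray_exists [ProperSpace X] (hX : GeodesicSpace X)
    {c : X → X → ℝ} (hc : c ∈ horoboundary X) (x : X) :
    ∃ γ : ℝ → X, γ 0 = x ∧ ∀ s t : ℝ, 0 ≤ s → s ≤ t →
      dist (γ s) (γ t) = t - s ∧ c (γ s) (γ t) = t - s := by
  have : Nonempty X := ⟨x⟩
  have hc1 : c ∈ horocompactification X := hc.1
  -- a countable dense family
  obtain ⟨D, hDc, hDd⟩ := TopologicalSpace.exists_countable_dense X
  obtain ⟨u, hu⟩ := hDc.exists_eq_range hDd.nonempty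
  set v : ℕ → X := fun n => Nat.casesOn n x u with hv
  have hdv : Dense (range v) := by
    refine hDd.mono ?_
    rw [hu]
    rintro _ ⟨k, rfl⟩
    exact ⟨k + 1, rfl⟩
  have hnear : ∀ (a : X), ∀ ε > 0, ∃ i, dist a (v i) < ε := by
    intro a ε hε
    obtain ⟨y, hyb, i, rfl⟩ := Metric.dense_iff.1 hdv a ε hε
    exact ⟨i, by rw [dist_comm]; exact mem_ball.1 hyb⟩
  -- approximating sequence of Busemann cocycles
  have hzex : ∀ n : ℕ, ∃ w : X, ∀ i ≤ n, ∀ j ≤ n,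
      |busemann w (v i) (v j) - c (v i) (v j)| < 1 / (n + 1) := by
    intro n
    set O : Set (X → X → ℝ) := ⋂ i ∈ Finset.range (n + 1), ⋂ j ∈ Finset.range (n + 1),
      {f : X → X → ℝ | |f (v i) (v j) - c (v i) (v j)| < 1 / (n + 1)} with hO
    have hOopen : IsOpen O := by
      refine isOpen_biInter_finset fun i _ => isOpen_biInter_finset fun j _ => ?_
      exact isOpen_lt (((eval_continuous (v i) (v j)).sub continuous_const).abs) continuous_const
    have hcmem : c ∈ O := by
      refine mem_iInter₂.2 fun i _ => mem_iInter₂.2 fun j _ => ?_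
      simp only [mem_setOf_eq, sub_self, abs_zero]
      positivity
    obtain ⟨f, hfO, hfr⟩ := _root_.mem_closure_iff.1 hc1 O hOopen hcmem
    obtain ⟨w, rfl⟩ := hfr
    refine ⟨w, fun i hi j hj => ?_⟩
    have h1 := mem_iInter₂.1 hfO i (Finset.mem_range.2 (Nat.lt_succ_of_le hi))
    exact mem_iInter₂.1 h1 j (Finset.mem_range.2 (Nat.lt_succ_of_le hj))
  choose z hz using hzex
  -- pointwise convergence of the approximating cocycles
  have hpt : ∀ a b : X, Tendsto (fun n => busemann (z n) a b) atTop (𝓝 (c a b)) := by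
    intro a b
    rw [Metric.tendsto_atTop]
    intro ε hε
    have hε5 : 0 < ε / 5 := by linarith
    obtain ⟨i, hi⟩ := hnear a (ε / 5) hε5
    obtain ⟨j, hj⟩ := hnear b (ε / 5) hε5
    obtain ⟨M, hM⟩ := exists_nat_one_div_lt hε5
    refine ⟨max M (max i j), fun n hn => ?_⟩
    have hMn : M ≤ n := le_trans (le_max_left _ _) hn
    have hin : i ≤ n := le_trans (le_trans (le_max_left _ _) (le_max_right M _)) hn
    have hjn : j ≤ n := le_trans (le_trans (le_max_right _ _) (le_max_right M _)) hn
    have h1 := hz n i hin j hjn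
    have h2 := busemann_lip (z n) a (v i) b (v j)
    have h3 := horo_lip hc1 (v i) a (v j) b
    have h4 : (1 : ℝ) / (n + 1) ≤ 1 / (M + 1) := by
      apply one_div_le_one_div_of_le
      · positivity
      · have : (M : ℝ) ≤ n := Nat.cast_le.2 hMn
        linarith
    rw [Real.dist_eq]
    have e1 : busemann (z n) a b - c a b =
        (busemann (z n) a b - busemann (z n) (v i) (v j)) +
        (busemann (z n) (v i) (v j) - c (v i) (v j)) +
        (c (v i) (v j) - c a b) := by ring
    rw [e1]
    rw [abs_le] at h2
    rw [abs_lt] at h1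
    rw [abs_le] at h3
    rw [abs_lt]
    rw [dist_comm (v i) a, dist_comm (v j) b] at h3
    constructor <;> nlinarith [h1.1, h1.2, h2.1, h2.2, h3.1, h3.2]
  -- the approximating points escape to infinity
  have hdiv : Tendsto (fun n => dist x (z n)) atTop atTop := by
    by_contra h
    rw [Filter.tendsto_atTop] at h
    push_neg at h
    obtain ⟨R0, hR0⟩ := h
    have hR0' : ∃ᶠ n in atTop, dist x (z n) ≤ R0 :=
      hR0.mono fun n hn => le_of_lt hn
    obtain ⟨φ, hφmono, hφ⟩ := Filter.extraction_of_frequently_atTop hR0'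
    have hball : ∀ n, z (φ n) ∈ closedBall x R0 := fun n => by
      rw [mem_closedBall, dist_comm]; exact hφ n
    obtain ⟨w, -, ψ, hψmono, hψ⟩ := (isCompact_closedBall x R0).tendsto_subseq hball
    refine hc.2 ⟨w, ?_⟩
    funext a b
    have hmono : StrictMono (φ ∘ ψ) := hφmono.comp hψmono
    have h1 : Tendsto (fun n => busemann (z (φ (ψ n))) a b) atTop (𝓝 (c a b)) :=
      (hpt a b).comp hmono.tendsto_atTop
    have h2 : Tendsto (fun n => busemann (z (φ (ψ n))) a b) atTop (𝓝 (busemann w a b)) := by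
      have hd1 : Tendsto (fun n => dist a (z (φ (ψ n)))) atTop (𝓝 (dist a w)) :=
        tendsto_const_nhds.dist hψ
      have hd2 : Tendsto (fun n => dist b (z (φ (ψ n)))) atTop (𝓝 (dist b w)) :=
        tendsto_const_nhds.dist hψ
      exact hd1.sub hd2
    exact tendsto_nhds_unique h2 h1
  -- geodesics from x to z n
  choose δ hδ0 hδR hδ using fun n => hX x (z n)
  set R : ℕ → ℝ := fun n => dist x (z n) with hR
  set g : ℕ → ℝ → X := fun n t => δ n (max 0 (min t (R n))) with hg
  have hφmem : ∀ n t, max 0 (min t (R n)) ∈ Icc (0 : ℝ) (R n) := fun n t =>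
    ⟨le_max_left _ _, max_le dist_nonneg (min_le_right _ _)⟩
  have h0mem : ∀ n, (0 : ℝ) ∈ Icc (0 : ℝ) (R n) := fun n => ⟨le_rfl, dist_nonneg⟩
  have hRmem : ∀ n, R n ∈ Icc (0 : ℝ) (R n) := fun n => ⟨dist_nonneg, le_rfl⟩
  have hg0 : ∀ n, g n 0 = x := by
    intro n
    have : max 0 (min 0 (R n)) = (0 : ℝ) := by
      rw [min_eq_left dist_nonneg, max_self]
    rw [hg]
    simp only
    rw [this]
    exact hδ0 n
  have hgball : ∀ n t, dist x (g n t) ≤ max 0 t := by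
    intro n t
    have := hδ n 0 (h0mem n) _ (hφmem n t)
    rw [hδ0 n] at this
    rw [hg]
    simp only
    rw [this, zero_sub, abs_neg, abs_of_nonneg (le_max_left _ _)]
    exact max_le_max le_rfl (min_le_left _ _)
  -- clamping is the identity for parameters below R n
  have hgs : ∀ (n : ℕ) (s : ℝ), 0 ≤ s → s ≤ R n → g n s = δ n s := by
    intro n s hs0 hsR
    rw [hg]
    simp only
    rw [min_eq_left hsR, max_eq_right hs0]
  -- exact computations along the geodesics
  have hexact : ∀ (n : ℕ) (s t : ℝ), 0 ≤ s → s ≤ t → t ≤ R n →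
      dist (g n s) (g n t) = t - s ∧ busemann (z n) (g n s) (g n t) = t - s ∧
      dist x (g n s) ≤ t ∧ dist x (g n t) ≤ t := by
    intro n s t hs hst htR
    have ht0 : 0 ≤ t := hs.trans hst
    have hsR : s ≤ R n := hst.trans htR
    have hsmem : s ∈ Icc (0 : ℝ) (R n) := ⟨hs, hsR⟩
    have htmem : t ∈ Icc (0 : ℝ) (R n) := ⟨ht0, htR⟩
    rw [hgs n s hs hsR, hgs n t ht0 htR]
    have hd : dist (δ n s) (δ n t) = t - s := by
      rw [hδ n s hsmem t htmem, abs_sub_comm, abs_of_nonneg (by linarith)]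
    have hbs : dist (δ n s) (z n) = R n - s := by
      rw [← hδR n, hδ n s hsmem _ (hRmem n), abs_sub_comm, abs_of_nonneg (by linarith [hsR])]
    have hbt : dist (δ n t) (z n) = R n - t := by
      rw [← hδR n, hδ n t htmem _ (hRmem n), abs_sub_comm, abs_of_nonneg (by linarith [htR])]
    refine ⟨hd, ?_, ?_, ?_⟩
    · rw [busemann, hbs, hbt]; ring
    · rw [← hδ0 n, hδ n 0 (h0mem n) s hsmem, zero_sub, abs_neg, abs_of_nonneg hs]
      exact hst
    · rw [← hδ0 n, hδ n 0 (h0mem n) t htmem, zero_sub, abs_neg, abs_of_nonneg ht0]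
  -- the ultrafilter limit of the geodesics
  obtain ⟨U, hU⟩ : ∃ U : Ultrafilter ℕ, (U : Filter ℕ) ≤ atTop :=
    ⟨Ultrafilter.of atTop, Ultrafilter.of_le _⟩
  have hlim : ∀ t : ℝ, ∃ y : X, Tendsto (fun n => g n t) (U : Filter ℕ) (𝓝 y) := by
    intro t
    have hK : IsCompact (closedBall x (max 0 t)) := isCompact_closedBall _ _
    have hmem : ∀ n, g n t ∈ closedBall x (max 0 t) := fun n => by
      rw [mem_closedBall, dist_comm]; exact hgball n t
    have hle : ↑(U.map fun n => g n t) ≤ 𝓟 (closedBall x (max 0 t)) := by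
      rw [Ultrafilter.coe_map, le_principal_iff, mem_map]
      exact univ_mem' hmem
    obtain ⟨y, -, hy⟩ := hK.ultrafilter_le_nhds (U.map fun n => g n t) hle
    rw [Ultrafilter.coe_map] at hy
    exact ⟨y, hy⟩
  choose γ hγ using hlim
  refine ⟨γ, ?_, ?_⟩
  · have h1 : Tendsto (fun n => g n 0) (U : Filter ℕ) (𝓝 x) := by
      simp only [hg0]
      exact tendsto_const_nhds
    exact tendsto_nhds_unique (hγ 0) h1
  intro s t hs hst
  have ht0 : 0 ≤ t := hs.trans hst
  have hev : ∀ᶠ n in (atTop : Filter ℕ), t ≤ R n := hdiv.eventually_ge_atTop t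
  -- the key convergence along atTop
  have key3 : Tendsto (fun n => c (g n s) (g n t)) atTop (𝓝 (t - s)) := by
    rw [Metric.tendsto_atTop]
    intro ε hε
    have hε5 : 0 < ε / 5 := by linarith
    -- a finite ε/5-net for the closed ball of radius t
    have hcover : closedBall x t ⊆ ⋃ i, ball (v i) (ε / 5) := by
      intro y _
      obtain ⟨i, hi⟩ := hnear y (ε / 5) hε5
      exact mem_iUnion.2 ⟨i, mem_ball.2 hi⟩
    obtain ⟨I, hI⟩ := (isCompact_closedBall x t).elim_finite_subcover
      (fun i => ball (v i) (ε / 5)) (fun i => isOpen_ball) hcover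
    set N0 : ℕ := I.sup id with hN0
    obtain ⟨M, hM⟩ := exists_nat_one_div_lt hε5
    obtain ⟨N1, hN1⟩ := (eventually_atTop).1 hev
    refine ⟨max N1 (max M N0), fun n hn => ?_⟩
    have hn1 : N1 ≤ n := le_trans (le_max_left _ _) hn
    have hnM : M ≤ n := le_trans (le_trans (le_max_left _ _) (le_max_right N1 _)) hn
    have hnN0 : N0 ≤ n := le_trans (le_trans (le_max_right _ _) (le_max_right N1 _)) hn
    have htR : t ≤ R n := hN1 n hn1
    obtain ⟨hdst, hbus, hxs, hxt⟩ := hexact n s t hs hst htR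
    have hps : g n s ∈ closedBall x t := by rw [mem_closedBall, dist_comm]; exact hxs
    have hpt' : g n t ∈ closedBall x t := by rw [mem_closedBall, dist_comm]; exact hxt
    obtain ⟨i, hiI, his⟩ := mem_iUnion₂.1 (hI hps)
    obtain ⟨j, hjI, hjt⟩ := mem_iUnion₂.1 (hI hpt')
    have hin : i ≤ n := le_trans (le_trans (Finset.le_sup (f := id) hiI) le_rfl) hnN0
    have hjn : j ≤ n := le_trans (le_trans (Finset.le_sup (f := id) hjI) le_rfl) hnN0
    have h1 := hz n i hin j hjn
    have h2 := busemann_lip (z n) (g n s) (v i) (g n t) (v j)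
    have h3 := horo_lip hc1 (v i) (g n s) (v j) (g n t)
    have h4 : (1 : ℝ) / (n + 1) ≤ 1 / (M + 1) := by
      apply one_div_le_one_div_of_le
      · positivity
      · have : (M : ℝ) ≤ n := Nat.cast_le.2 hnM
        linarith
    have hdis : dist (g n s) (v i) < ε / 5 := mem_ball.1 his
    have hdjt : dist (g n t) (v j) < ε / 5 := mem_ball.1 hjt
    rw [Real.dist_eq]
    have e1 : c (g n s) (g n t) - (t - s) =
        (c (g n s) (g n t) - c (v i) (v j)) +
        (c (v i) (v j) - busemann (z n) (v i) (v j)) +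
        (busemann (z n) (v i) (v j) - busemann (z n) (g n s) (g n t)) +
        (busemann (z n) (g n s) (g n t) - (t - s)) := by ring
    rw [e1, hbus, sub_self, add_zero]
    rw [abs_le] at h2
    rw [abs_lt] at h1
    rw [abs_le] at h3
    rw [dist_comm (v i) (g n s), dist_comm (v j) (g n t)] at h3
    rw [abs_lt]
    constructor <;> nlinarith [h1.1, h1.2, h2.1, h2.2, h3.1, h3.2, hdis, hdjt]
  -- transfer along the ultrafilter
  have hevd : ∀ᶠ n in (U : Filter ℕ), dist (g n s) (g n t) = t - s ∧
      busemann (z n) (g n s) (g n t) = t - s :=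
    hU (hev.mono fun n hn => ⟨(hexact n s t hs hst hn).1, (hexact n s t hs hst hn).2.1⟩)
  constructor
  · have h1 : Tendsto (fun n => dist (g n s) (g n t)) (U : Filter ℕ)
        (𝓝 (dist (γ s) (γ t))) := (hγ s).dist (hγ t)
    have h2 : Tendsto (fun n => dist (g n s) (g n t)) (U : Filter ℕ) (𝓝 (t - s)) :=
      tendsto_const_nhds.congr' (hevd.mono fun n hn => hn.1.symm)
    exact tendsto_nhds_unique h1 h2
  · have hcont : Tendsto (fun n => c (g n s) (g n t)) (U : Filter ℕ)
        (𝓝 (c (γ s) (γ t))) := by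
      rw [tendsto_iff_dist_tendsto_zero]
      have hb : Tendsto (fun n => dist (g n s) (γ s) + dist (g n t) (γ t))
          (U : Filter ℕ) (𝓝 0) := by
        have := (tendsto_iff_dist_tendsto_zero.1 (hγ s)).add
          (tendsto_iff_dist_tendsto_zero.1 (hγ t))
        simpa using this
      refine squeeze_zero (fun n => dist_nonneg) (fun n => ?_) hb
      rw [Real.dist_eq]
      exact horo_lip hc1 _ _ _ _
    exact tendsto_nhds_unique hcont (key3.mono_left hU)
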